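/- Let R be a finite set with |R| ≥ 2, (p_x)_{x∈R} probability weights on I, (J_{xy}) a symmetric family of reals, δ > 0, σ = max_{s∈I}|s|, and let ξ_t(R) = Σ_{s_R∈I^R} Σ_{g∈G_R} Σ_{S⊂R} Π_{{x,y}∈E_g}(e^{J_{xy}s_xs_y}−1) Π_{x∈S}(e^{its_x}−1) Π_{x∈R} p_x(s_x). Then for every t with 0 < t ≤ δ, |d²ξ_t(R)/dt²| ≤ σ² |R|² w_0(R), where w_0(R) = (1+δσ)^{|R|} Σ_{s_R∈I^R} Π_{x∈R} p_x(s_x) · |Σ_{g∈G_R} Π_{{x,y}∈E_g}(e^{J_{xy}s_xs_y}−1)|. -/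

import Mathlib

open Finset
open scoped Classical

namespace SpinLCLT

/-- The set of connected simple graphs on a finite vertex type `W`. -/
noncomputable def connGraphs (W : Type*) [Fintype W] : Finset (SimpleGraph W) :=
  Finset.univ.filter (fun g => g.Connected)

/-- The product over the edges `{x,y}` of a graph `g` of the Mayer factors
`e^{J_{xy} f(x) f(y)} − 1`. -/
noncomputable def edgeProd {W : Type*} [Fintype W] [DecidableEq W]
    (J : W → W → ℝ) (hJ : ∀ x y, J x y = J y x) (f : W → ℝ)
    (g : SimpleGraph W) : ℂ :=
  ∏ e ∈ g.edgeFinset,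
    Sym2.lift ⟨fun x y => Complex.exp ((J x y * f x * f y : ℝ) : ℂ) - 1,
      fun x y => by dsimp only; rw [hJ x y, mul_right_comm]⟩ e

/-- The polymer activity `ξ_t(R)`:
`ξ_t({x}) = Σ_{s∈I}(e^{its}−1)p_x(s)` and, for `|R| ≥ 2`,
`ξ_t(R) = Σ_{s_R∈I^R} Σ_{g∈G_R} Σ_{S⊆R} Π_{{x,y}∈E_g}(e^{J_{xy}s_xs_y}−1)
Π_{x∈S}(e^{its_x}−1) Π_{x∈R} p_x(s_x)`, where `I = Finset.Icc a b`. -/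
noncomputable def xi (a b : ℤ) {V : Type*} [DecidableEq V] (p : V → ℤ → ℝ)
    (J : V → V → ℝ) (hJ : ∀ x y, J x y = J y x) (R : Finset V) (t : ℝ) : ℂ :=
  if R.card = 1 then
    ∑ x ∈ R, ∑ z ∈ Finset.Icc a b,
      (Complex.exp (Complex.I * t * z) - 1) * (p x z : ℂ)
  else
    ∑ s ∈ Fintype.piFinset (fun _ : ↥R => Finset.Icc a b),
      ∑ g ∈ connGraphs ↥R,
        ∑ S ∈ (Finset.univ : Finset ↥R).powerset,
          (edgeProd (fun x y : ↥R => J ↑x ↑y) (fun x y => hJ ↑x ↑y)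
              (fun x : ↥R => (s x : ℝ)) g) *
            (∏ x ∈ S, (Complex.exp (Complex.I * t * (s x : ℤ)) - 1)) *
            (∏ x : ↥R, (p ↑x (s x) : ℂ))

/-- The weight `w₀(R)`: `w₀({x}) = δσ` and, for `|R| ≥ 2`,
`w₀(R) = (1+δσ)^{|R|} Σ_{s_R∈I^R} Π_{x∈R} p_x(s_x) ·
|Σ_{g∈G_R} Π_{{x,y}∈E_g}(e^{J_{xy}s_xs_y}−1)|`. -/
noncomputable def w0 (a b : ℤ) {V : Type*} [DecidableEq V] (δ σ : ℝ)
    (p : V → ℤ → ℝ) (J : V → V → ℝ) (hJ : ∀ x y, J x y = J y x)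
    (R : Finset V) : ℝ :=
  if R.card = 1 then δ * σ
  else (1 + δ * σ) ^ R.card *
    ∑ s ∈ Fintype.piFinset (fun _ : ↥R => Finset.Icc a b),
      (∏ x : ↥R, p ↑x (s x)) *
        ‖∑ g ∈ connGraphs ↥R,
          edgeProd (fun x y : ↥R => J ↑x ↑y) (fun x y => hJ ↑x ↑y)
            (fun x : ↥R => (s x : ℝ)) g‖


private lemma hasDerivAt_cexp_mul (c : ℂ) (t : ℝ) :
    HasDerivAt (fun u : ℝ => Complex.exp (c * u)) (c * Complex.exp (c * t)) t := by
  have h := ((Complex.hasDerivAt_exp (c * (t:ℂ))).comp (t : ℂ)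
    ((hasDerivAt_id (t : ℂ)).const_mul c))
  simpa [mul_comm] using h.comp_ofReal

/-- For `R` with `|R| ≥ 2`, probability weights `(p_x)`,
symmetric `(J_{xy})`, `δ > 0`, `σ = max_{s∈I}|s|`: for `0 < t ≤ δ`,
`|d²ξ_t(R)/dt²| ≤ σ² |R|² w₀(R)`. -/
theorem xi_second_derivative_bound
    (a b : ℤ) (hab : a < b) {V : Type*} [DecidableEq V]
    (p : V → ℤ → ℝ)
    (hp0 : ∀ x, ∀ z ∈ Finset.Icc a b, 0 ≤ p x z)
    (hp1 : ∀ x, ∑ z ∈ Finset.Icc a b, p x z = 1)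
    (J : V → V → ℝ) (hJ : ∀ x y, J x y = J y x)
    (δ σ : ℝ) (hδ : 0 < δ) (hσ : σ = max |(a : ℝ)| |(b : ℝ)|)
    (R : Finset V) (hR : 2 ≤ R.card)
    (t : ℝ) (ht0 : 0 < t) (htδ : t ≤ δ) :
    ‖deriv (deriv (xi a b p J hJ R)) t‖ ≤
      σ ^ 2 * (R.card : ℝ) ^ 2 * w0 a b δ σ p J hJ R := by
  classical
  have hR1 : R.card ≠ 1 := by omega
  set A := Fintype.piFinset (fun _ : ↥R => Finset.Icc a b) with hA
  set EP : ((↥R) → ℤ) → SimpleGraph ↥R → ℂ := fun s g =>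
    edgeProd (fun x y : ↥R => J ↑x ↑y) (fun x y => hJ ↑x ↑y)
      (fun x : ↥R => (s x : ℝ)) g with hEP
  set P : ((↥R) → ℤ) → ℂ := fun s => ∏ x : ↥R, (p ↑x (s x) : ℂ) with hP
  set N : ((↥R) → ℤ) → ℂ := fun s => ((∑ x : ↥R, s x : ℤ) : ℂ) with hN
  -- Step 1: rewrite xi without the powerset sum
  have hxi : xi a b p J hJ R = fun u : ℝ =>
      ∑ s ∈ A, ∑ g ∈ connGraphs ↥R,
        (EP s g * P s) * Complex.exp ((Complex.I * N s) * u) := by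
    funext u
    rw [xi, if_neg hR1]
    refine Finset.sum_congr rfl fun s _ => Finset.sum_congr rfl fun g _ => ?_
    have key : ∑ S ∈ (Finset.univ : Finset ↥R).powerset,
        ∏ x ∈ S, (Complex.exp (Complex.I * u * (s x : ℤ)) - 1)
        = Complex.exp ((Complex.I * N s) * u) := by
      have h1 := Finset.prod_add
        (fun x : ↥R => Complex.exp (Complex.I * u * ((s x : ℤ) : ℂ)) - 1)
        (fun _ : ↥R => (1 : ℂ)) Finset.univ
      simp only [Finset.prod_const_one, mul_one, sub_add_cancel] at h1
      rw [← h1, ← Complex.exp_sum]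
      congr 1
      rw [hN]
      push_cast
      rw [Finset.mul_sum, Finset.sum_mul]
      exact Finset.sum_congr rfl fun x _ => by ring
    calc ∑ S ∈ (Finset.univ : Finset ↥R).powerset,
          EP s g * (∏ x ∈ S, (Complex.exp (Complex.I * u * (s x : ℤ)) - 1)) * P s
        = EP s g * (∑ S ∈ (Finset.univ : Finset ↥R).powerset,
            ∏ x ∈ S, (Complex.exp (Complex.I * u * (s x : ℤ)) - 1)) * P s := by
          rw [← Finset.sum_mul, ← Finset.mul_sum]
      _ = (EP s g * P s) * Complex.exp ((Complex.I * N s) * u) := by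
          rw [key]; ring
  -- Step 2: first derivative
  have hD1 : ∀ u : ℝ, HasDerivAt (xi a b p J hJ R)
      (∑ s ∈ A, ∑ g ∈ connGraphs ↥R,
        (EP s g * P s) * ((Complex.I * N s) * Complex.exp ((Complex.I * N s) * u))) u := by
    intro u
    rw [hxi]
    refine HasDerivAt.fun_sum fun s _ => HasDerivAt.fun_sum fun g _ => ?_
    exact (hasDerivAt_cexp_mul (Complex.I * N s) u).const_mul (EP s g * P s)
  have hd1 : deriv (xi a b p J hJ R) = fun u : ℝ =>
      ∑ s ∈ A, ∑ g ∈ connGraphs ↥R,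
        (EP s g * P s) * ((Complex.I * N s) * Complex.exp ((Complex.I * N s) * u)) :=
    funext fun u => (hD1 u).deriv
  -- Step 3: second derivative
  have hD2 : HasDerivAt (deriv (xi a b p J hJ R))
      (∑ s ∈ A, ∑ g ∈ connGraphs ↥R,
        (EP s g * P s) * ((Complex.I * N s) *
          ((Complex.I * N s) * Complex.exp ((Complex.I * N s) * t)))) t := by
    rw [hd1]
    refine HasDerivAt.fun_sum fun s _ => HasDerivAt.fun_sum fun g _ => ?_
    exact ((hasDerivAt_cexp_mul (Complex.I * N s) t).const_mul
      (Complex.I * N s)).const_mul (EP s g * P s)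
  have hd2 : deriv (deriv (xi a b p J hJ R)) t
      = ∑ s ∈ A, ∑ g ∈ connGraphs ↥R,
        (EP s g * P s) * ((Complex.I * N s) *
          ((Complex.I * N s) * Complex.exp ((Complex.I * N s) * t))) := hD2.deriv
  rw [hd2]
  -- Step 4: bounds
  have hσ0 : 0 ≤ σ := hσ ▸ le_trans (abs_nonneg _) (le_max_left _ _)
  have hzb : ∀ z : ℤ, z ∈ Finset.Icc a b → |(z : ℝ)| ≤ σ := by
    intro z hz
    rw [Finset.mem_Icc] at hz
    rw [hσ, abs_le]
    constructor
    · calc -(max |(a:ℝ)| |(b:ℝ)|) ≤ -|(a:ℝ)| := neg_le_neg (le_max_left _ _)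
        _ ≤ (a:ℝ) := neg_abs_le _
        _ ≤ (z:ℝ) := by exact_mod_cast hz.1
    · calc (z:ℝ) ≤ (b:ℝ) := by exact_mod_cast hz.2
        _ ≤ |(b:ℝ)| := le_abs_self _
        _ ≤ max |(a:ℝ)| |(b:ℝ)| := le_max_right _ _
  have hNb : ∀ s ∈ A, ‖N s‖ ≤ σ * R.card := by
    intro s hs
    rw [hN]
    simp only [Complex.norm_intCast]
    push_cast
    calc |(∑ x : ↥R, (s x : ℝ))| ≤ ∑ x : ↥R, |(s x : ℝ)| :=
          Finset.abs_sum_le_sum_abs _ _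
      _ ≤ ∑ _x : ↥R, σ := by
          refine Finset.sum_le_sum fun x _ => hzb _ ?_
          exact (Fintype.mem_piFinset.mp hs) x
      _ = σ * R.card := by
          rw [Finset.sum_const, Finset.card_univ, Fintype.card_coe, nsmul_eq_mul,
            mul_comm]
  have hPabs : ∀ s ∈ A, ‖P s‖ = ∏ x : ↥R, p ↑x (s x) := by
    intro s hs
    rw [hP]
    simp only [norm_prod]
    refine Finset.prod_congr rfl fun x _ => ?_
    rw [Complex.norm_real, Real.norm_eq_abs, abs_of_nonneg (hp0 _ _ ((Fintype.mem_piFinset.mp hs) x))]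
  have hP0 : ∀ s ∈ A, 0 ≤ ∏ x : ↥R, p ↑x (s x) := fun s hs =>
    Finset.prod_nonneg fun x _ => hp0 _ _ ((Fintype.mem_piFinset.mp hs) x)
  have hexp1 : ∀ s : (↥R) → ℤ, ‖Complex.exp ((Complex.I * N s) * t)‖ = 1 := by
    intro s
    have : (Complex.I * N s) * t = (((∑ x : ↥R, s x : ℤ) : ℝ) * t : ℝ) * Complex.I := by
      rw [hN]; push_cast; ring
    rw [this, Complex.norm_exp_ofReal_mul_I]
  -- per-s bound
  have hterm : ∀ s ∈ A, ‖∑ g ∈ connGraphs ↥R,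
      (EP s g * P s) * ((Complex.I * N s) *
        ((Complex.I * N s) * Complex.exp ((Complex.I * N s) * t)))‖
      ≤ σ ^ 2 * (R.card : ℝ) ^ 2 *
        ((∏ x : ↥R, p ↑x (s x)) * ‖∑ g ∈ connGraphs ↥R, EP s g‖) := by
    intro s hs
    have hfac : ∑ g ∈ connGraphs ↥R, (EP s g * P s) * ((Complex.I * N s) *
        ((Complex.I * N s) * Complex.exp ((Complex.I * N s) * t)))
        = (∑ g ∈ connGraphs ↥R, EP s g) * (P s * ((Complex.I * N s) *
          ((Complex.I * N s) * Complex.exp ((Complex.I * N s) * t)))) := by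
      rw [Finset.sum_mul]
      exact Finset.sum_congr rfl fun g _ => by ring
    rw [hfac, norm_mul]
    have e1 : ‖P s * ((Complex.I * N s) *
        ((Complex.I * N s) * Complex.exp ((Complex.I * N s) * t)))‖
        = (∏ x : ↥R, p ↑x (s x)) * (‖N s‖ * ‖N s‖) := by
      simp only [norm_mul, Complex.norm_I, one_mul, hexp1 s, mul_one, hPabs s hs]
    rw [e1]
    have h1 : ‖∑ g ∈ connGraphs ↥R, EP s g‖ *
        ((∏ x : ↥R, p ↑x (s x)) * (‖N s‖ * ‖N s‖))
        ≤ ‖∑ g ∈ connGraphs ↥R, EP s g‖ *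
          ((∏ x : ↥R, p ↑x (s x)) * ((σ * R.card) * (σ * R.card))) := by
      refine mul_le_mul_of_nonneg_left (mul_le_mul_of_nonneg_left ?_ (hP0 s hs))
        (norm_nonneg _)
      exact mul_le_mul (hNb s hs) (hNb s hs) (norm_nonneg _)
        (by positivity)
    calc ‖∑ g ∈ connGraphs ↥R, EP s g‖ *
          ((∏ x : ↥R, p ↑x (s x)) * (‖N s‖ * ‖N s‖))
        ≤ ‖∑ g ∈ connGraphs ↥R, EP s g‖ *
          ((∏ x : ↥R, p ↑x (s x)) * ((σ * R.card) * (σ * R.card))) := h1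
      _ = σ ^ 2 * (R.card : ℝ) ^ 2 *
          ((∏ x : ↥R, p ↑x (s x)) * ‖∑ g ∈ connGraphs ↥R, EP s g‖) := by
          ring
  -- assemble
  have hW0 : 0 ≤ ∑ s ∈ A, (∏ x : ↥R, p ↑x (s x)) *
      ‖∑ g ∈ connGraphs ↥R, EP s g‖ :=
    Finset.sum_nonneg fun s hs => mul_nonneg (hP0 s hs) (norm_nonneg _)
  have hpow : (1 : ℝ) ≤ (1 + δ * σ) ^ R.card :=
    one_le_pow₀ (by nlinarith)
  calc ‖∑ s ∈ A, ∑ g ∈ connGraphs ↥R,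
        (EP s g * P s) * ((Complex.I * N s) *
          ((Complex.I * N s) * Complex.exp ((Complex.I * N s) * t)))‖
      ≤ ∑ s ∈ A, ‖∑ g ∈ connGraphs ↥R,
        (EP s g * P s) * ((Complex.I * N s) *
          ((Complex.I * N s) * Complex.exp ((Complex.I * N s) * t)))‖ :=
        norm_sum_le _ _
    _ ≤ ∑ s ∈ A, σ ^ 2 * (R.card : ℝ) ^ 2 *
        ((∏ x : ↥R, p ↑x (s x)) * ‖∑ g ∈ connGraphs ↥R, EP s g‖) :=
        Finset.sum_le_sum hterm
    _ = σ ^ 2 * (R.card : ℝ) ^ 2 * ∑ s ∈ A, (∏ x : ↥R, p ↑x (s x)) *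
        ‖∑ g ∈ connGraphs ↥R, EP s g‖ := by rw [Finset.mul_sum]
    _ ≤ σ ^ 2 * (R.card : ℝ) ^ 2 * ((1 + δ * σ) ^ R.card *
        ∑ s ∈ A, (∏ x : ↥R, p ↑x (s x)) *
          ‖∑ g ∈ connGraphs ↥R, EP s g‖) := by
        refine mul_le_mul_of_nonneg_left ?_ (by positivity)
        nlinarith [mul_le_mul_of_nonneg_right hpow hW0]
    _ = σ ^ 2 * (R.card : ℝ) ^ 2 * w0 a b δ σ p J hJ R := by
        rw [w0, if_neg hR1]

end SpinLCLT
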